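/- There exists n < ω such that for every linear order A, the shift graph Sh_2(A) contains no half-graph of height n; that is, the edge relation of Sh_2(A) is stable, uniformly in A. -/

import Mathlib

open Cardinal

/-- `t` is the shift of `s`: `s_i = t_{i-1}` for all `1 ≤ i ≤ r-1`. -/
def IsShiftOf {A : Type} {r : ℕ} (s t : Fin r → A) : Prop :=
  ∀ (i : ℕ) (h : i + 1 < r), s ⟨i + 1, h⟩ = t ⟨i, Nat.lt_of_succ_lt h⟩

/-- The shift graph `Sh_r(A)` on a linear order `A`: vertices are strictly increasing
`r`-tuples from `A`, and distinct vertices `s, t` are adjacent iff one is the shift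
of the other. -/
def ShiftGraph (A : Type) [LinearOrder A] (r : ℕ) :
    SimpleGraph {s : Fin r → A // StrictMono s} where
  Adj s t := s ≠ t ∧ (IsShiftOf s.1 t.1 ∨ IsShiftOf t.1 s.1)
  symm := by
    constructor
    rintro s t ⟨hne, h⟩
    exact ⟨hne.symm, h.symm⟩
  loopless := by
    constructor
    rintro s ⟨hne, -⟩
    exact hne rfl

/-- The symmetric shift graph `Sh_r^sym(A)` on a set `A`: vertices are `r`-tuples of
pairwise distinct elements of `A`, and distinct vertices `s, t` are adjacent iff one
is the shift of the other. -/
def SymShiftGraph (A : Type) (r : ℕ) :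
    SimpleGraph {s : Fin r → A // Function.Injective s} where
  Adj s t := s ≠ t ∧ (IsShiftOf s.1 t.1 ∨ IsShiftOf t.1 s.1)
  symm := by
    constructor
    rintro s t ⟨hne, h⟩
    exact ⟨hne.symm, h.symm⟩
  loopless := by
    constructor
    rintro s ⟨hne, -⟩
    exact hne rfl

theorem stmt_8 :
    ∃ n : ℕ, ∀ (A : Type) (_ : LinearOrder A),
      ¬ ∃ a b : Fin n → {s : Fin 2 → A // StrictMono s},
        ∀ i j : Fin n, (ShiftGraph A 2).Adj (a i) (b j) ↔ i < j := by
  classical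
  refine ⟨6, fun A _ => ?_⟩
  rintro ⟨a, b, hab⟩
  have hmono : ∀ s : {s : Fin 2 → A // StrictMono s}, s.1 0 < s.1 1 :=
    fun s => s.2 (by norm_num)
  -- adjacency gives one of two equalities
  have hadj : ∀ i j : Fin 6, i < j →
      ((a i).1 1 = (b j).1 0 ∨ (b j).1 1 = (a i).1 0) := by
    intro i j hij
    obtain ⟨-, h⟩ := (hab i j).mpr hij
    rcases h with h | h
    · exact Or.inl (h 0 (by norm_num))
    · exact Or.inr (h 0 (by norm_num))
  have noR1 : ∀ i : Fin 6, (a i).1 1 = (b i).1 0 → False := by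
    intro i h
    have hne : a i ≠ b i := by
      intro he
      rw [← he] at h
      exact absurd h (ne_of_gt (hmono (a i)))
    have hsh : IsShiftOf (a i).1 (b i).1 := by
      intro k hk
      have hk0 : k = 0 := by omega
      subst hk0
      exact h
    exact absurd ((hab i i).mp ⟨hne, Or.inl hsh⟩) (lt_irrefl i)
  have noR2 : ∀ i : Fin 6, (b i).1 1 = (a i).1 0 → False := by
    intro i h
    have hne : a i ≠ b i := by
      intro he
      rw [he] at h
      exact absurd h (ne_of_gt (hmono (b i)))
    have hsh : IsShiftOf (b i).1 (a i).1 := by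
      intro k hk
      have hk0 : k = 0 := by omega
      subst hk0
      exact h
    exact absurd ((hab i i).mp ⟨hne, Or.inr hsh⟩) (lt_irrefl i)
  -- triangle lemmas
  have L1 : ∀ i1 i2 i3 : Fin 6,
      (a i1).1 1 = (b i2).1 0 → (a i1).1 1 = (b i3).1 0 →
      (a i2).1 1 = (b i3).1 0 → False := by
    intro i1 i2 i3 h12 h13 h23
    exact noR1 i2 (h23.trans (h13.symm.trans h12))
  have L2 : ∀ i1 i2 i3 : Fin 6,
      (b i2).1 1 = (a i1).1 0 → (b i3).1 1 = (a i1).1 0 →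
      (b i3).1 1 = (a i2).1 0 → False := by
    intro i1 i2 i3 h12 h13 h23
    exact noR2 i2 ((h12.trans h13.symm).trans h23)
  have pigeon : ∀ f : Fin 5 → Bool, ∃ i j k : Fin 5,
      i < j ∧ j < k ∧ f i = f j ∧ f j = f k := by decide
  set f : Fin 5 → Bool := fun j => decide ((a 0).1 1 = (b j.succ).1 0) with hf
  obtain ⟨j1, j2, j3, h12, h23, e1, e2⟩ := pigeon f
  have hs12 : j1.succ < j2.succ := Fin.succ_lt_succ_iff.mpr h12
  have hs23 : j2.succ < j3.succ := Fin.succ_lt_succ_iff.mpr h23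
  have hs13 : j1.succ < j3.succ := hs12.trans hs23
  have h0 : ∀ j : Fin 5, (0 : Fin 6) < j.succ := fun j => j.succ_pos
  rcases Bool.eq_false_or_eq_true (f j1) with hv | hv
  rotate_left
  · -- f is false: ¬R1 0 j, so R2 0 j for all three
    have hR2 : ∀ j : Fin 5, f j = false → (b j.succ).1 1 = (a 0).1 0 := by
      intro j hj
      rcases hadj 0 j.succ (h0 j) with h | h
      · rw [hf] at hj
        simp only [decide_eq_false_iff_not] at hj
        exact absurd h hj
      · exact h
    have r1 := hR2 j1 hv
    have r2 := hR2 j2 (e1 ▸ hv)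
    have r3 := hR2 j3 (e2 ▸ e1 ▸ hv)
    by_cases c12 : (b j2.succ).1 1 = (a j1.succ).1 0
    · exact L2 0 j1.succ j2.succ r1 r2 c12
    by_cases c13 : (b j3.succ).1 1 = (a j1.succ).1 0
    · exact L2 0 j1.succ j3.succ r1 r3 c13
    by_cases c23 : (b j3.succ).1 1 = (a j2.succ).1 0
    · exact L2 0 j2.succ j3.succ r2 r3 c23
    -- all pairs R1
    have d12 : (a j1.succ).1 1 = (b j2.succ).1 0 := (hadj _ _ hs12).resolve_right c12
    have d13 : (a j1.succ).1 1 = (b j3.succ).1 0 := (hadj _ _ hs13).resolve_right c13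
    have d23 : (a j2.succ).1 1 = (b j3.succ).1 0 := (hadj _ _ hs23).resolve_right c23
    exact L1 j1.succ j2.succ j3.succ d12 d13 d23
  · -- f is true: R1 0 j for all three
    have hR1 : ∀ j : Fin 5, f j = true → (a 0).1 1 = (b j.succ).1 0 := by
      intro j hj
      exact of_decide_eq_true hj
    have r1 := hR1 j1 hv
    have r2 := hR1 j2 (e1 ▸ hv)
    have r3 := hR1 j3 (e2 ▸ e1 ▸ hv)
    by_cases c12 : (a j1.succ).1 1 = (b j2.succ).1 0
    · exact L1 0 j1.succ j2.succ r1 r2 c12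
    by_cases c13 : (a j1.succ).1 1 = (b j3.succ).1 0
    · exact L1 0 j1.succ j3.succ r1 r3 c13
    by_cases c23 : (a j2.succ).1 1 = (b j3.succ).1 0
    · exact L1 0 j2.succ j3.succ r2 r3 c23
    have d12 : (b j2.succ).1 1 = (a j1.succ).1 0 := (hadj _ _ hs12).resolve_left c12
    have d13 : (b j3.succ).1 1 = (a j1.succ).1 0 := (hadj _ _ hs13).resolve_left c13
    have d23 : (b j3.succ).1 1 = (a j2.succ).1 0 := (hadj _ _ hs23).resolve_left c23
    exact L2 j1.succ j2.succ j3.succ d12 d13 d23
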